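/- Let m ≥ 2, and let G = (g_{ij}) be an m×m matrix with 0 ≤ g_{ij} ≤ 1, g_{ii} = 0, and ∑_{j=1}^m g_{ij} = 1 for each i. Let α_1,...,α_m ≥ 0, let n_1,...,n_m be positive integers, and let |T_i| be integers with 0 ≤ |T_i| ≤ n_i. Define α*_1 = α_1 + ∑_{l=2}^m (1 - |T_l|/n_l) g_{l1} α_l and recursively α*_i = α_i + ∑_{j=1}^{i-1} (1 - |T_j|/n_j) g_{ji} α*_j + ∑_{l=i+1}^m (1 - |T_l|/n_l) g_{li} α_l for i = 2,...,m. Then ∑_{i=1}^m (|T_i|/n_i) α*_i ≤ ∑_{i=1}^m α_i. -/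

import Mathlib

/-- Exchange of summation over pairs `j < i` inside `[1, m]`. -/
lemma bgki_swap (m : ℕ) (f : ℕ → ℕ → ℝ) :
    ∑ i ∈ Finset.Icc 1 m, ∑ j ∈ Finset.Icc 1 (i - 1), f j i
      = ∑ j ∈ Finset.Icc 1 m, ∑ i ∈ Finset.Icc (j + 1) m, f j i := by
  have h1 : ∀ i ∈ Finset.Icc 1 m, ∑ j ∈ Finset.Icc 1 (i - 1), f j i
      = ∑ j ∈ Finset.Icc 1 m, if j < i then f j i else 0 := by
    intro i hi
    rw [← Finset.sum_filter]
    apply Finset.sum_congr _ (fun _ _ => rfl)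
    ext j
    simp only [Finset.mem_Icc, Finset.mem_filter]
    rw [Finset.mem_Icc] at hi
    omega
  rw [Finset.sum_congr rfl h1, Finset.sum_comm]
  refine Finset.sum_congr rfl fun j hj => ?_
  rw [← Finset.sum_filter]
  apply Finset.sum_congr _ (fun _ _ => rfl)
  ext i
  simp only [Finset.mem_Icc, Finset.mem_filter]
  rw [Finset.mem_Icc] at hj
  omega

/-- Key inequality of Theorem 1: the true-null-weighted sum of worst-case
local levels `α*_i` is bounded by the total level `∑ α_i`. -/
theorem bonferroni_gatekeeping_key_inequality
    (m : ℕ) (hm : 2 ≤ m)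
    (g : ℕ → ℕ → ℝ) (a astar : ℕ → ℝ) (n T : ℕ → ℕ)
    (hg0 : ∀ i j, 0 ≤ g i j) (hg1 : ∀ i j, g i j ≤ 1)
    (hgdiag : ∀ i, g i i = 0)
    (hgrow : ∀ i ∈ Finset.Icc 1 m, ∑ j ∈ Finset.Icc 1 m, g i j = 1)
    (ha : ∀ i, 0 ≤ a i) (hn : ∀ i, 0 < n i) (hT : ∀ i, T i ≤ n i)
    (hstar : ∀ i ∈ Finset.Icc 1 m,
      astar i = a i
        + ∑ j ∈ Finset.Icc 1 (i - 1), (1 - (T j : ℝ) / n j) * g j i * astar j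
        + ∑ l ∈ Finset.Icc (i + 1) m, (1 - (T l : ℝ) / n l) * g l i * a l) :
    ∑ i ∈ Finset.Icc 1 m, ((T i : ℝ) / n i) * astar i
      ≤ ∑ i ∈ Finset.Icc 1 m, a i := by
  set t : ℕ → ℝ := fun i => (T i : ℝ) / n i with htdef
  have ht0 : ∀ i, 0 ≤ t i := fun i => div_nonneg (Nat.cast_nonneg _) (Nat.cast_nonneg _)
  have ht1 : ∀ i, t i ≤ 1 := by
    intro i
    apply div_le_one_of_le₀
    · exact_mod_cast hT i
    · exact Nat.cast_nonneg _
  have ht1' : ∀ i, 0 ≤ 1 - t i := fun i => by linarith [ht1 i]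
  -- α*_i ≥ α_i for all i ∈ [1, m], by strong induction
  have key : ∀ i, i ∈ Finset.Icc 1 m → a i ≤ astar i := by
    intro i
    induction i using Nat.strong_induction_on with
    | _ i ih =>
      intro hi
      rw [hstar i hi]
      have h1 : 0 ≤ ∑ j ∈ Finset.Icc 1 (i - 1), (1 - t j) * g j i * astar j := by
        apply Finset.sum_nonneg
        intro j hj
        rw [Finset.mem_Icc] at hj hi
        have hjm : j ∈ Finset.Icc 1 m := Finset.mem_Icc.mpr ⟨hj.1, by omega⟩
        have : 0 ≤ astar j := le_trans (ha j) (ih j (by omega) hjm)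
        exact mul_nonneg (mul_nonneg (ht1' j) (hg0 j i)) this
      have h2 : 0 ≤ ∑ l ∈ Finset.Icc (i + 1) m, (1 - t l) * g l i * a l := by
        apply Finset.sum_nonneg
        intro l _
        exact mul_nonneg (mul_nonneg (ht1' l) (hg0 l i)) (ha l)
      linarith
  have astar_nonneg : ∀ i ∈ Finset.Icc 1 m, 0 ≤ astar i :=
    fun i hi => le_trans (ha i) (key i hi)
  -- main computation
  have expand : ∑ i ∈ Finset.Icc 1 m, t i * astar i
      = ∑ i ∈ Finset.Icc 1 m, a i
        + (∑ i ∈ Finset.Icc 1 m,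
            (∑ j ∈ Finset.Icc 1 (i - 1), (1 - t j) * g j i * astar j
              + ∑ l ∈ Finset.Icc (i + 1) m, (1 - t l) * g l i * a l)
          - ∑ i ∈ Finset.Icc 1 m, (1 - t i) * astar i) := by
    rw [← Finset.sum_sub_distrib, ← Finset.sum_add_distrib]
    apply Finset.sum_congr rfl
    intro i hi
    linear_combination hstar i hi
  -- it suffices to bound the inflow by the available outflow capacity
  have inflow_le : ∑ i ∈ Finset.Icc 1 m,
      (∑ j ∈ Finset.Icc 1 (i - 1), (1 - t j) * g j i * astar j
        + ∑ l ∈ Finset.Icc (i + 1) m, (1 - t l) * g l i * a l)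
      ≤ ∑ i ∈ Finset.Icc 1 m, (1 - t i) * astar i := by
    rw [Finset.sum_add_distrib]
    -- A-part: contributions from earlier indices (use swap forward)
    have hA : ∑ i ∈ Finset.Icc 1 m, ∑ j ∈ Finset.Icc 1 (i - 1),
        (1 - t j) * g j i * astar j
        = ∑ j ∈ Finset.Icc 1 m,
            (1 - t j) * astar j * ∑ i ∈ Finset.Icc (j + 1) m, g j i := by
      rw [bgki_swap m (fun j i => (1 - t j) * g j i * astar j)]
      apply Finset.sum_congr rfl
      intro j _
      rw [Finset.mul_sum]
      apply Finset.sum_congr rfl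
      intro i _
      ring
    -- B-part: contributions from later indices (use swap backward)
    have hB : ∑ i ∈ Finset.Icc 1 m, ∑ l ∈ Finset.Icc (i + 1) m,
        (1 - t l) * g l i * a l
        = ∑ l ∈ Finset.Icc 1 m,
            (1 - t l) * a l * ∑ i ∈ Finset.Icc 1 (l - 1), g l i := by
      rw [← bgki_swap m (fun i l => (1 - t l) * g l i * a l)]
      apply Finset.sum_congr rfl
      intro l _
      rw [Finset.mul_sum]
      apply Finset.sum_congr rfl
      intro i _
      ring
    rw [hA, hB, ← Finset.sum_add_distrib]
    apply Finset.sum_le_sum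
    intro j hj
    -- row sum split: below + above = 1
    have hjm := Finset.mem_Icc.mp hj
    have hsplit : (∑ i ∈ Finset.Icc 1 (j - 1), g j i)
        + (∑ i ∈ Finset.Icc (j + 1) m, g j i) = 1 := by
      have hd : Disjoint (Finset.Icc 1 (j - 1)) (Finset.Icc j m) := by
        rw [Finset.disjoint_left]
        intro x hx hx'
        rw [Finset.mem_Icc] at hx hx'
        omega
      have hu : Finset.Icc 1 (j - 1) ∪ Finset.Icc j m = Finset.Icc 1 m := by
        ext x
        simp only [Finset.mem_union, Finset.mem_Icc]
        omega
      have hins : Finset.Icc j m = insert j (Finset.Icc (j + 1) m) := by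
        ext x
        simp only [Finset.mem_insert, Finset.mem_Icc]
        omega
      have := hgrow j hj
      rw [← hu, Finset.sum_union hd, hins, Finset.sum_insert (by
        simp only [Finset.mem_Icc]; omega), hgdiag j] at this
      linarith
    have hlo : 0 ≤ ∑ i ∈ Finset.Icc 1 (j - 1), g j i :=
      Finset.sum_nonneg fun i _ => hg0 j i
    have hhi : 0 ≤ ∑ i ∈ Finset.Icc (j + 1) m, g j i :=
      Finset.sum_nonneg fun i _ => hg0 j i
    have hkey := key j hj
    have h1 : a j * ∑ i ∈ Finset.Icc 1 (j - 1), g j i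
        ≤ astar j * ∑ i ∈ Finset.Icc 1 (j - 1), g j i :=
      mul_le_mul_of_nonneg_right hkey hlo
    have h2 : (1 - t j) * astar j * ∑ i ∈ Finset.Icc (j + 1) m, g j i
        + (1 - t j) * a j * ∑ i ∈ Finset.Icc 1 (j - 1), g j i
        ≤ (1 - t j) * astar j * ∑ i ∈ Finset.Icc (j + 1) m, g j i
        + (1 - t j) * astar j * ∑ i ∈ Finset.Icc 1 (j - 1), g j i := by
      nlinarith [mul_le_mul_of_nonneg_left h1 (ht1' j)]
    have h3 : (1 - t j) * astar j * ∑ i ∈ Finset.Icc (j + 1) m, g j i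
        + (1 - t j) * astar j * ∑ i ∈ Finset.Icc 1 (j - 1), g j i
        = (1 - t j) * astar j := by
      linear_combination (1 - t j) * astar j * hsplit
    linarith
  linarith [expand, inflow_le]
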